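/- Let λ and μ be partitions with ℓ(λ) ≤ K and ℓ(μ) ≤ K, and x a complex number with all terms defined and nonzero. Then 1/(∏_{(i,j)∈λ}(λ'_j+μ_i−i−j+1+x)² · ∏_{(i,j)∈μ}(μ'_j+λ_i−i−j+1−x)²) = ∏_{i=1}^{K} [Γ(x)²Γ(1−x)² / (Γ(m_i+K+1+x)² Γ(l_i+K+1−x)²)] · ∏_{i,j=1}^{K} (m_i − l_j + x)². -/

import Mathlib

open Finset

lemma lin_ne (x : ℂ) (hx : ∀ m : ℤ, x ≠ (m : ℂ)) (a : ℤ) : x + (a : ℂ) ≠ 0 := by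
  intro h
  apply hx (-a)
  push_cast
  linear_combination h

lemma telescope_Icc (F : ℤ → ℂ) (hF : ∀ v, F v ≠ 0) (a b : ℤ) (hab : a ≤ b) :
    ∏ v ∈ Icc a b, (F v * (F (v + 1))⁻¹) = F a * (F (b + 1))⁻¹ := by
  obtain ⟨n, rfl⟩ : ∃ n : ℕ, b = a + n := ⟨(b - a).toNat, by omega⟩
  clear hab
  induction n with
  | zero => simp
  | succ n ih =>
      rw [show a + ((n + 1 : ℕ) : ℤ) = (a + n) + 1 by push_cast; ring,
        show Icc a (a + (n : ℤ) + 1) = insert (a + (n : ℤ) + 1) (Icc a (a + n)) by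
          ext v
          simp only [Finset.mem_Icc, Finset.mem_insert]
          omega,
        prod_insert (by simp), ih]
      field_simp [hF]

lemma Gamma_prod (s : ℂ) (hs : ∀ t : ℕ, s + (t : ℂ) ≠ 0) (n : ℕ) :
    Complex.Gamma (s + n) = (∏ t ∈ range n, (s + t)) * Complex.Gamma s := by
  induction n with
  | zero => simp
  | succ n ih =>
      rw [show s + ((n + 1 : ℕ) : ℂ) = (s + n) + 1 by push_cast; ring,
        Complex.Gamma_add_one _ (hs n), ih, prod_range_succ]
      ring

/-- number of parts of `mu` (within `[1,K]`) that are `≥ j`, i.e. `mu'_j`. -/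
def conjC (K : ℕ) (mu : ℕ → ℕ) (j : ℕ) : ℕ := ((Icc 1 K).filter fun t => j ≤ mu t).card

lemma conjC_le_K (K : ℕ) (mu : ℕ → ℕ) (j : ℕ) : conjC K mu j ≤ K := by
  have := Finset.card_filter_le (Icc 1 K) (fun t => j ≤ mu t)
  simpa [conjC, Nat.card_Icc] using this

lemma conjC_ge (K : ℕ) (mu : ℕ → ℕ) (hmono : ∀ i j, 1 ≤ i → i ≤ j → mu j ≤ mu i)
    (i j : ℕ) (hi : 1 ≤ i) (hiK : i ≤ K) (h : j ≤ mu i) :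
    i ≤ conjC K mu j := by
  have hsub : Icc 1 i ⊆ (Icc 1 K).filter fun t => j ≤ mu t := by
    intro t ht
    simp only [mem_Icc] at ht
    simp only [mem_filter, mem_Icc]
    exact ⟨⟨ht.1, le_trans ht.2 hiK⟩, le_trans h (hmono t i ht.1 ht.2)⟩
  have := Finset.card_le_card hsub
  simpa [conjC, Nat.card_Icc] using this

lemma conjC_lt (K : ℕ) (mu : ℕ → ℕ) (hmono : ∀ i j, 1 ≤ i → i ≤ j → mu j ≤ mu i)
    (i j : ℕ) (hi : 1 ≤ i) (h : mu i < j) :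
    conjC K mu j ≤ i - 1 := by
  have hsub : ((Icc 1 K).filter fun t => j ≤ mu t) ⊆ Icc 1 (i - 1) := by
    intro t ht
    simp only [mem_filter, mem_Icc] at ht
    simp only [mem_Icc]
    refine ⟨ht.1.1, ?_⟩
    by_contra hc
    have hti : i ≤ t := by omega
    have := hmono i t hi hti
    omega
  have := Finset.card_le_card hsub
  simpa [conjC, Nat.card_Icc] using this

lemma conjC_anti (K : ℕ) (mu : ℕ → ℕ) (j j' : ℕ) (h : j ≤ j') :
    conjC K mu j' ≤ conjC K mu j := by
  apply Finset.card_le_card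
  intro t ht
  simp only [mem_filter] at ht ⊢
  exact ⟨ht.1, le_trans h ht.2⟩

/-- holes are distinct from particles -/
lemma hole_ne_particle (K : ℕ) (mu : ℕ → ℕ)
    (hmono : ∀ i j, 1 ≤ i → i ≤ j → mu j ≤ mu i) (hlen : ∀ i, K < i → mu i = 0)
    (i j : ℕ) (hi : 1 ≤ i) (hj : 1 ≤ j) :
    (j : ℤ) - 1 - (conjC K mu j : ℤ) ≠ (mu i : ℤ) - i := by
  by_cases h : j ≤ mu i
  · have hiK : i ≤ K := by
      by_contra hc
      have := hlen i (by omega)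
      omega
    have := conjC_ge K mu hmono i j hi hiK h
    intro hc
    omega
  · push_neg at h
    have := conjC_lt K mu hmono i j hi h
    intro hc
    omega

lemma m_injOn (K : ℕ) (mu : ℕ → ℕ) (hmono : ∀ i j, 1 ≤ i → i ≤ j → mu j ≤ mu i)
    (r : ℕ) (hr1 : 1 ≤ r) :
    ∀ i ∈ Icc r K, ∀ i' ∈ Icc r K, ((mu i : ℤ) - i) = ((mu i' : ℤ) - i') → i = i' := by
  intro i hi i' hi' h
  simp only [mem_Icc] at hi hi'
  by_contra hc
  rcases Nat.lt_or_ge i i' with hlt | hge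
  · have := hmono i i' (by omega) (le_of_lt hlt); omega
  · have hlt : i' < i := by omega
    have := hmono i' i (by omega) (le_of_lt hlt); omega

lemma h_injOn (K : ℕ) (mu : ℕ → ℕ) (r : ℕ) :
    ∀ j ∈ Icc 1 (mu r), ∀ j' ∈ Icc 1 (mu r),
      ((j : ℤ) - 1 - (conjC K mu j : ℤ)) = ((j' : ℤ) - 1 - (conjC K mu j' : ℤ)) → j = j' := by
  intro j hj j' hj' h
  by_contra hc
  rcases Nat.lt_or_ge j j' with hlt | hge
  · have := conjC_anti K mu j j' (le_of_lt hlt); omega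
  · have := conjC_anti K mu j' j (by omega); omega

lemma maya_disjoint (K : ℕ) (mu : ℕ → ℕ)
    (hmono : ∀ i j, 1 ≤ i → i ≤ j → mu j ≤ mu i) (hlen : ∀ i, K < i → mu i = 0)
    (r : ℕ) (hr1 : 1 ≤ r) :
    Disjoint ((Icc r K).image fun i => (mu i : ℤ) - i)
      ((Icc 1 (mu r)).image fun j : ℕ => (j : ℤ) - 1 - (conjC K mu j : ℤ)) := by
  rw [Finset.disjoint_left]
  intro v hv hv'
  simp only [mem_image, mem_Icc] at hv hv'
  obtain ⟨i, hi, rfl⟩ := hv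
  obtain ⟨j, hj, hj2⟩ := hv'
  exact hole_ne_particle K mu hmono hlen i j (by omega) hj.1 hj2

lemma maya_cover (K : ℕ) (mu : ℕ → ℕ)
    (hmono : ∀ i j, 1 ≤ i → i ≤ j → mu j ≤ mu i) (hlen : ∀ i, K < i → mu i = 0)
    (r : ℕ) (hr1 : 1 ≤ r) (hrK : r ≤ K) :
    ((Icc r K).image fun i => (mu i : ℤ) - i) ∪
      ((Icc 1 (mu r)).image fun j : ℕ => (j : ℤ) - 1 - (conjC K mu j : ℤ))
      = Icc (-(K : ℤ)) ((mu r : ℤ) - r) := by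
  apply Finset.eq_of_subset_of_card_le
  · intro v hv
    simp only [mem_union, mem_image, mem_Icc] at hv
    simp only [mem_Icc]
    rcases hv with ⟨i, hi, rfl⟩ | ⟨j, hj, rfl⟩
    · have := hmono r i hr1 hi.1
      constructor <;> omega
    · have h1 := conjC_le_K K mu j
      have h2 := conjC_ge K mu hmono r j hr1 hrK hj.2
      constructor <;> omega
  · rw [Finset.card_union_of_disjoint (maya_disjoint K mu hmono hlen r hr1),
      Finset.card_image_of_injOn (fun a ha b hb h =>
        m_injOn K mu hmono r hr1 a (Finset.mem_coe.mp ha) b (Finset.mem_coe.mp hb) h),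
      Finset.card_image_of_injOn (fun a ha b hb h =>
        h_injOn K mu r a (Finset.mem_coe.mp ha) b (Finset.mem_coe.mp hb) h)]
    rw [Int.card_Icc, Nat.card_Icc, Nat.card_Icc]
    omega

lemma maya_prod (K : ℕ) (mu : ℕ → ℕ)
    (hmono : ∀ i j, 1 ≤ i → i ≤ j → mu j ≤ mu i) (hlen : ∀ i, K < i → mu i = 0)
    (g : ℤ → ℂ) (r : ℕ) (hr1 : 1 ≤ r) (hrK : r ≤ K) :
    ∏ v ∈ Icc (-(K : ℤ)) ((mu r : ℤ) - r), g v
      = (∏ i ∈ Icc r K, g ((mu i : ℤ) - i)) *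
        ∏ j ∈ Icc 1 (mu r), g ((j : ℤ) - 1 - (conjC K mu j : ℤ)) := by
  rw [← maya_cover K mu hmono hlen r hr1 hrK,
    Finset.prod_union (maya_disjoint K mu hmono hlen r hr1),
    Finset.prod_image (m_injOn K mu hmono r hr1),
    Finset.prod_image (h_injOn K mu r)]


lemma local_identity (K : ℕ) (mu : ℕ → ℕ)
    (hmono : ∀ i j, 1 ≤ i → i ≤ j → mu j ≤ mu i) (hlen : ∀ i, K < i → mu i = 0)
    (x : ℂ) (hx : ∀ m : ℤ, x ≠ (m : ℂ))
    (r : ℕ) (hr1 : 1 ≤ r) (hrK : r ≤ K) (lr : ℤ) :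
    ((mu r : ℂ) - r - lr + x) ^ 2
      * (∏ i ∈ Icc (r + 1) K,
          (((mu i : ℂ) - i - lr + x) ^ 2 * ((((mu i : ℂ) - i - lr + 1 + x) ^ 2))⁻¹))
      * (∏ j ∈ Icc 1 (mu r),
          (((conjC K mu j : ℂ) - j + 1 + lr - x) ^ 2
            * ((((conjC K mu j : ℂ) - j + lr - x) ^ 2))⁻¹))
      = ((lr : ℂ) + K - x) ^ 2 := by
  set F : ℤ → ℂ := fun v => ((lr : ℂ) - x - v) ^ 2 with hFdef
  have hF : ∀ v, F v ≠ 0 := by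
    intro v
    apply pow_ne_zero
    intro h
    apply hx (lr - v)
    push_cast
    linear_combination -h
  set g : ℤ → ℂ := fun v => F v * (F (v + 1))⁻¹ with hgdef
  have hmr : (-(K : ℤ)) ≤ (mu r : ℤ) - r := by omega
  have tele := telescope_Icc F hF (-(K : ℤ)) ((mu r : ℤ) - r) hmr
  have maya := maya_prod K mu hmono hlen g r hr1 hrK
  have stepA : (∏ i ∈ Icc (r + 1) K,
      (((mu i : ℂ) - i - lr + x) ^ 2 * ((((mu i : ℂ) - i - lr + 1 + x) ^ 2))⁻¹))
      = ∏ i ∈ Icc (r + 1) K, g ((mu i : ℤ) - i) := by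
    apply Finset.prod_congr rfl
    intro i _
    simp only [hgdef, hFdef]
    congr 1
    · push_cast; ring
    · congr 1; push_cast; ring
  have stepB : (∏ j ∈ Icc 1 (mu r),
      (((conjC K mu j : ℂ) - j + 1 + lr - x) ^ 2
        * ((((conjC K mu j : ℂ) - j + lr - x) ^ 2))⁻¹))
      = ∏ j ∈ Icc 1 (mu r), g ((j : ℤ) - 1 - (conjC K mu j : ℤ)) := by
    apply Finset.prod_congr rfl
    intro j _
    simp only [hgdef, hFdef]
    congr 1
    · push_cast; ring
    · congr 1; push_cast; ring
  have stepC : ((mu r : ℂ) - r - lr + x) ^ 2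
      = F (((mu r : ℤ) - r) + 1) * g ((mu r : ℤ) - r) := by
    simp only [hgdef]
    rw [mul_comm (F ((mu r : ℤ) - r)), ← mul_assoc,
      mul_inv_cancel₀ (hF (((mu r : ℤ) - r) + 1)), one_mul]
    simp only [hFdef]
    push_cast; ring
  have hsplit : Icc r K = insert r (Icc (r + 1) K) := by
    ext t; simp only [mem_Icc, mem_insert]; omega
  rw [stepA, stepB, stepC]
  calc (F (((mu r : ℤ) - r) + 1) * g ((mu r : ℤ) - r) * ∏ i ∈ Icc (r + 1) K, g ((mu i : ℤ) - i))
        * ∏ j ∈ Icc 1 (mu r), g ((j : ℤ) - 1 - (conjC K mu j : ℤ))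
      = F (((mu r : ℤ) - r) + 1) * ((∏ i ∈ Icc r K, g ((mu i : ℤ) - i))
          * ∏ j ∈ Icc 1 (mu r), g ((j : ℤ) - 1 - (conjC K mu j : ℤ))) := by
        rw [hsplit, Finset.prod_insert (by simp)]
        ring
    _ = F (((mu r : ℤ) - r) + 1) * (F (-(K : ℤ)) * (F (((mu r : ℤ) - r) + 1))⁻¹) := by
        rw [← maya, tele]
    _ = F (-(K : ℤ)) := by
        rw [mul_comm (F (-(K:ℤ))), ← mul_assoc, mul_inv_cancel₀ (hF _), one_mul]
    _ = ((lr : ℂ) + K - x) ^ 2 := by simp only [hFdef]; push_cast; ring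

def keyLHS (K : ℕ) (lam mu : ℕ → ℕ) (x : ℂ) : ℂ :=
  (∏ i ∈ Icc 1 K, ∏ j ∈ Icc 1 (lam i),
      ((conjC K lam j : ℂ) + (mu i : ℂ) - (i : ℂ) - (j : ℂ) + 1 + x) ^ 2) *
  (∏ i ∈ Icc 1 K, ∏ j ∈ Icc 1 (mu i),
      ((conjC K mu j : ℂ) + (lam i : ℂ) - (i : ℂ) - (j : ℂ) + 1 - x) ^ 2) *
  (∏ i ∈ Icc 1 K, ∏ j ∈ Icc 1 K,
      (((mu i : ℂ) - (i : ℂ)) - ((lam j : ℂ) - (j : ℂ)) + x) ^ 2)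

def keyRHS (K : ℕ) (lam mu : ℕ → ℕ) (x : ℂ) : ℂ :=
  ∏ i ∈ Icc 1 K, ((∏ t ∈ range (mu i + (K - i) + 1), (x + (t : ℂ))) ^ 2 *
    (∏ t ∈ range (lam i + (K - i)), ((t : ℂ) + 1 - x)) ^ 2)

lemma prod_split3 (f : ℕ → ℂ) (r K : ℕ) (h1 : 1 ≤ r) (h2 : r ≤ K) :
    ∏ i ∈ Icc 1 K, f i = (∏ i ∈ Icc 1 (r - 1), f i) * f r * ∏ i ∈ Icc (r + 1) K, f i := by
  rw [show Icc 1 K = Icc 1 (r - 1) ∪ insert r (Icc (r + 1) K) by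
        ext t
        simp only [mem_Icc, mem_union, mem_insert]
        omega,
    prod_union (by
      rw [disjoint_left]
      intro a ha hb
      simp only [mem_Icc] at ha
      simp only [mem_insert, mem_Icc] at hb
      omega),
    prod_insert (by simp only [mem_Icc]; omega)]
  ring

lemma prod_swap_one (s : Finset ℕ) (r : ℕ) (hr : r ∈ s) (G G' : ℕ → ℂ)
    (hagree : ∀ i ∈ s, i ≠ r → G i = G' i) :
    (∏ i ∈ s, G i) * G' r = (∏ i ∈ s, G' i) * G r := by
  rw [← Finset.mul_prod_erase s G hr, ← Finset.mul_prod_erase s G' hr,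
    Finset.prod_congr rfl (fun i hi =>
      hagree i (Finset.mem_of_mem_erase hi) (Finset.ne_of_mem_erase hi))]
  ring

lemma cross_to_ratio {A B n d : ℂ} (hd : d ≠ 0) (h : A * d = B * n) :
    A = B * (n * d⁻¹) := by
  field_simp
  linear_combination h

lemma step (K : ℕ) (lam mu : ℕ → ℕ)
    (hlam_mono : ∀ i j, 1 ≤ i → i ≤ j → lam j ≤ lam i)
    (hmu_mono : ∀ i j, 1 ≤ i → i ≤ j → mu j ≤ mu i)
    (hmu_len : ∀ i, K < i → mu i = 0)
    (x : ℂ) (hx : ∀ m : ℤ, x ≠ (m : ℂ))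
    (r : ℕ) (hr1 : 1 ≤ r) (hrK : r ≤ K) (hc : 1 ≤ lam r)
    (htop : ∀ t, r < t → lam t = 0)
    (IH : keyLHS K (Function.update lam r (lam r - 1)) mu x
        = keyRHS K (Function.update lam r (lam r - 1)) mu x) :
    keyLHS K lam mu x = keyRHS K lam mu x := by
  set lam' := Function.update lam r (lam r - 1) with hlam'def
  have hlam'_r : lam' r = lam r - 1 := Function.update_self r (lam r - 1) lam
  have hlam'_ne : ∀ i, i ≠ r → lam' i = lam i := fun i hi =>
    Function.update_of_ne hi (lam r - 1) lam
  -- conjugate facts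
  have hconj_c : conjC K lam (lam r) = r := by
    have hfil : ((Icc 1 K).filter fun t => lam r ≤ lam t) = Icc 1 r := by
      ext t
      simp only [mem_filter, mem_Icc]
      constructor
      · rintro ⟨⟨h1, h2⟩, h3⟩
        refine ⟨h1, ?_⟩
        by_contra hcon
        have := htop t (by omega)
        omega
      · rintro ⟨h1, h2⟩
        have := hlam_mono t r h1 h2
        exact ⟨⟨h1, le_trans h2 hrK⟩, by omega⟩
    rw [conjC, hfil, Nat.card_Icc]
    omega
  have hconj'_c : conjC K lam' (lam r) = r - 1 := by
    have hfil : ((Icc 1 K).filter fun t => lam r ≤ lam' t) = Icc 1 (r - 1) := by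
      ext t
      simp only [mem_filter, mem_Icc]
      constructor
      · rintro ⟨⟨h1, h2⟩, h3⟩
        refine ⟨h1, ?_⟩
        by_contra hcon
        rcases Nat.lt_or_ge r t with hlt | hge
        · rw [hlam'_ne t (by omega)] at h3
          have := htop t hlt
          omega
        · have htr : t = r := by omega
          rw [htr, hlam'_r] at h3
          omega
      · rintro ⟨h1, h2⟩
        have hne : t ≠ r := by omega
        rw [hlam'_ne t hne]
        have := hlam_mono t r h1 (by omega)
        exact ⟨⟨h1, by omega⟩, by omega⟩
    rw [conjC, hfil, Nat.card_Icc]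
    omega
  have hconj_ne : ∀ j, j ≠ lam r → conjC K lam' j = conjC K lam j := by
    intro j hj
    unfold conjC
    congr 1
    apply Finset.filter_congr
    intro t ht
    by_cases htr : t = r
    · subst htr
      rw [hlam'_r]
      omega
    · rw [hlam'_ne t htr]
  -- main local quantities
  set N : ℕ → ℂ := fun i => ((r : ℂ) + (mu i : ℂ) - (i : ℂ) - (lam r : ℂ) + 1 + x) ^ 2 with hNdef
  set D : ℕ → ℂ := fun i => ((r : ℂ) - 1 + (mu i : ℂ) - (i : ℂ) - (lam r : ℂ) + 1 + x) ^ 2 with hDdef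
  have hNne : ∀ i, N i ≠ 0 := by
    intro i
    apply pow_ne_zero
    intro h
    apply hx ((lam r : ℤ) + (i : ℤ) - (r : ℤ) - (mu i : ℤ) - 1)
    push_cast
    linear_combination h
  have hDne : ∀ i, D i ≠ 0 := by
    intro i
    apply pow_ne_zero
    intro h
    apply hx ((lam r : ℤ) + (i : ℤ) - (r : ℤ) - (mu i : ℤ))
    push_cast
    linear_combination h
  have hrmem : r ∈ Icc 1 K := by simp only [mem_Icc]; exact ⟨hr1, hrK⟩
  set zr : ℤ := (lam r : ℤ) - (r : ℤ) with hzrdef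
  have LI := local_identity K mu hmu_mono hmu_len x hx r hr1 hrK zr
  -- ### lambda-product ratio
  have rowlam_lt : ∀ i ∈ Icc 1 (r - 1),
      (∏ j ∈ Icc 1 (lam i),
        ((conjC K lam j : ℂ) + (mu i : ℂ) - (i : ℂ) - (j : ℂ) + 1 + x) ^ 2)
      = (∏ j ∈ Icc 1 (lam' i),
          ((conjC K lam' j : ℂ) + (mu i : ℂ) - (i : ℂ) - (j : ℂ) + 1 + x) ^ 2)
        * (N i * (D i)⁻¹) := by
    intro i hi
    simp only [mem_Icc] at hi
    have hir : i ≠ r := by omega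
    rw [hlam'_ne i hir]
    have hcmem : lam r ∈ Icc 1 (lam i) := by
      simp only [mem_Icc]
      exact ⟨hc, hlam_mono i r hi.1 (by omega)⟩
    have cross := prod_swap_one (Icc 1 (lam i)) (lam r) hcmem
        (fun j => ((conjC K lam j : ℂ) + (mu i : ℂ) - (i : ℂ) - (j : ℂ) + 1 + x) ^ 2)
        (fun j => ((conjC K lam' j : ℂ) + (mu i : ℂ) - (i : ℂ) - (j : ℂ) + 1 + x) ^ 2)
        (fun j _ hj => by
          show ((conjC K lam j : ℂ) + (mu i : ℂ) - (i : ℂ) - (j : ℂ) + 1 + x) ^ 2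
            = ((conjC K lam' j : ℂ) + (mu i : ℂ) - (i : ℂ) - (j : ℂ) + 1 + x) ^ 2
          rw [hconj_ne j hj])
    rw [hconj_c, hconj'_c, Nat.cast_sub hr1] at cross
    apply cross_to_ratio (hDne i)
    calc (∏ j ∈ Icc 1 (lam i),
          ((conjC K lam j : ℂ) + (mu i : ℂ) - (i : ℂ) - (j : ℂ) + 1 + x) ^ 2) * D i
        = (∏ j ∈ Icc 1 (lam i),
            ((conjC K lam j : ℂ) + (mu i : ℂ) - (i : ℂ) - (j : ℂ) + 1 + x) ^ 2)
          * (((r : ℂ) - 1 + (mu i : ℂ) - (i : ℂ) - ((lam r : ℕ) : ℂ) + 1 + x) ^ 2) := by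
          simp only [hDdef]
      _ = (∏ j ∈ Icc 1 (lam i),
            ((conjC K lam' j : ℂ) + (mu i : ℂ) - (i : ℂ) - (j : ℂ) + 1 + x) ^ 2)
          * (((r : ℂ) + (mu i : ℂ) - (i : ℂ) - ((lam r : ℕ) : ℂ) + 1 + x) ^ 2) := by
          rw [← cross]; ring
      _ = (∏ j ∈ Icc 1 (lam i),
            ((conjC K lam' j : ℂ) + (mu i : ℂ) - (i : ℂ) - (j : ℂ) + 1 + x) ^ 2) * N i := by
          simp only [hNdef]
  have rowlam_r :
      (∏ j ∈ Icc 1 (lam r),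
        ((conjC K lam j : ℂ) + (mu r : ℂ) - (r : ℂ) - (j : ℂ) + 1 + x) ^ 2)
      = (∏ j ∈ Icc 1 (lam' r),
          ((conjC K lam' j : ℂ) + (mu r : ℂ) - (r : ℂ) - (j : ℂ) + 1 + x) ^ 2) * N r := by
    have hcongr : (∏ j ∈ Icc 1 (lam r - 1),
          ((conjC K lam' j : ℂ) + (mu r : ℂ) - (r : ℂ) - (j : ℂ) + 1 + x) ^ 2)
        = ∏ j ∈ Icc 1 (lam r - 1),
            ((conjC K lam j : ℂ) + (mu r : ℂ) - (r : ℂ) - (j : ℂ) + 1 + x) ^ 2 := by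
      apply Finset.prod_congr rfl
      intro j hj
      simp only [mem_Icc] at hj
      rw [hconj_ne j (by omega)]
    rw [hlam'_r,
      show Icc 1 (lam r) = insert (lam r) (Icc 1 (lam r - 1)) by
        ext t; simp only [mem_insert, mem_Icc]; omega,
      prod_insert (by simp only [mem_Icc]; omega), hconj_c, hcongr]
    simp only [hNdef]
    ring
  have rowlam_gt : ∀ i ∈ Icc (r + 1) K,
      (∏ j ∈ Icc 1 (lam i),
        ((conjC K lam j : ℂ) + (mu i : ℂ) - (i : ℂ) - (j : ℂ) + 1 + x) ^ 2)
      = (∏ j ∈ Icc 1 (lam' i),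
          ((conjC K lam' j : ℂ) + (mu i : ℂ) - (i : ℂ) - (j : ℂ) + 1 + x) ^ 2) := by
    intro i hi
    simp only [mem_Icc] at hi
    rw [hlam'_ne i (by omega), htop i (by omega),
      Finset.Icc_eq_empty (by norm_num), prod_empty, prod_empty]
  have Plam_eq :
      (∏ i ∈ Icc 1 K, ∏ j ∈ Icc 1 (lam i),
        ((conjC K lam j : ℂ) + (mu i : ℂ) - (i : ℂ) - (j : ℂ) + 1 + x) ^ 2)
      = (∏ i ∈ Icc 1 K, ∏ j ∈ Icc 1 (lam' i),
          ((conjC K lam' j : ℂ) + (mu i : ℂ) - (i : ℂ) - (j : ℂ) + 1 + x) ^ 2)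
        * ((∏ i ∈ Icc 1 (r - 1), (N i * (D i)⁻¹)) * N r) := by
    rw [prod_split3 (fun i => ∏ j ∈ Icc 1 (lam i),
          ((conjC K lam j : ℂ) + (mu i : ℂ) - (i : ℂ) - (j : ℂ) + 1 + x) ^ 2) r K hr1 hrK,
      prod_split3 (fun i => ∏ j ∈ Icc 1 (lam' i),
          ((conjC K lam' j : ℂ) + (mu i : ℂ) - (i : ℂ) - (j : ℂ) + 1 + x) ^ 2) r K hr1 hrK,
      Finset.prod_congr rfl rowlam_lt, rowlam_r,
      Finset.prod_congr rfl rowlam_gt, prod_mul_distrib]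
    ring
  -- ### mu-product ratio
  have hpne : ∀ j : ℕ, ((conjC K mu j : ℂ) - (j : ℂ) + (zr : ℂ) - x) ^ 2 ≠ 0 := by
    intro j
    apply pow_ne_zero
    intro h
    apply hx ((conjC K mu j : ℤ) - (j : ℤ) + zr)
    push_cast
    linear_combination -h
  have Pmu_eq :
      (∏ i ∈ Icc 1 K, ∏ j ∈ Icc 1 (mu i),
        ((conjC K mu j : ℂ) + (lam i : ℂ) - (i : ℂ) - (j : ℂ) + 1 - x) ^ 2)
      = (∏ i ∈ Icc 1 K, ∏ j ∈ Icc 1 (mu i),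
          ((conjC K mu j : ℂ) + (lam' i : ℂ) - (i : ℂ) - (j : ℂ) + 1 - x) ^ 2)
        * ∏ j ∈ Icc 1 (mu r),
            (((conjC K mu j : ℂ) - (j : ℂ) + 1 + (zr : ℂ) - x) ^ 2
              * ((((conjC K mu j : ℂ) - (j : ℂ) + (zr : ℂ) - x) ^ 2))⁻¹) := by
    have hG'ne : (∏ j ∈ Icc 1 (mu r),
        ((conjC K mu j : ℂ) + (lam' r : ℂ) - (r : ℂ) - (j : ℂ) + 1 - x) ^ 2) ≠ 0 := by
      apply Finset.prod_ne_zero_iff.mpr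
      intro j _
      apply pow_ne_zero
      intro h
      apply hx ((conjC K mu j : ℤ) + (lam' r : ℤ) - (r : ℤ) - (j : ℤ) + 1)
      push_cast
      linear_combination -h
    have hG'r : (∏ j ∈ Icc 1 (mu r),
          ((conjC K mu j : ℂ) + (lam' r : ℂ) - (r : ℂ) - (j : ℂ) + 1 - x) ^ 2)
        * (∏ j ∈ Icc 1 (mu r),
            (((conjC K mu j : ℂ) - (j : ℂ) + 1 + (zr : ℂ) - x) ^ 2
              * ((((conjC K mu j : ℂ) - (j : ℂ) + (zr : ℂ) - x) ^ 2))⁻¹))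
        = ∏ j ∈ Icc 1 (mu r),
            ((conjC K mu j : ℂ) + (lam r : ℂ) - (r : ℂ) - (j : ℂ) + 1 - x) ^ 2 := by
      rw [hlam'_r, ← prod_mul_distrib]
      apply Finset.prod_congr rfl
      intro j _
      have e1 : ((conjC K mu j : ℂ) + ((lam r - 1 : ℕ) : ℂ) - (r : ℂ) - (j : ℂ) + 1 - x) ^ 2
          = ((conjC K mu j : ℂ) - (j : ℂ) + (zr : ℂ) - x) ^ 2 := by
        rw [Nat.cast_sub hc, hzrdef]
        push_cast
        ring
      rw [e1, mul_comm (((conjC K mu j : ℂ) - (j : ℂ) + 1 + (zr : ℂ) - x) ^ 2),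
        ← mul_assoc, mul_inv_cancel₀ (hpne j), one_mul, hzrdef]
      push_cast
      ring
    have cross := prod_swap_one (Icc 1 K) r hrmem
        (fun i => ∏ j ∈ Icc 1 (mu i),
          ((conjC K mu j : ℂ) + (lam i : ℂ) - (i : ℂ) - (j : ℂ) + 1 - x) ^ 2)
        (fun i => ∏ j ∈ Icc 1 (mu i),
          ((conjC K mu j : ℂ) + (lam' i : ℂ) - (i : ℂ) - (j : ℂ) + 1 - x) ^ 2)
        (fun i _ hir => by
          show (∏ j ∈ Icc 1 (mu i),
              ((conjC K mu j : ℂ) + (lam i : ℂ) - (i : ℂ) - (j : ℂ) + 1 - x) ^ 2)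
            = ∏ j ∈ Icc 1 (mu i),
              ((conjC K mu j : ℂ) + (lam' i : ℂ) - (i : ℂ) - (j : ℂ) + 1 - x) ^ 2
          rw [hlam'_ne i hir])
    rw [← hG'r] at cross
    apply mul_right_cancel₀ hG'ne
    linear_combination cross
  -- ### double-product ratio
  have Dinner : ∀ i ∈ Icc 1 K,
      (∏ j ∈ Icc 1 K, (((mu i : ℂ) - (i : ℂ)) - ((lam j : ℂ) - (j : ℂ)) + x) ^ 2)
      = (∏ j ∈ Icc 1 K, (((mu i : ℂ) - (i : ℂ)) - ((lam' j : ℂ) - (j : ℂ)) + x) ^ 2)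
        * (D i * (N i)⁻¹) := by
    intro i _
    have cross := prod_swap_one (Icc 1 K) r hrmem
        (fun j => (((mu i : ℂ) - (i : ℂ)) - ((lam j : ℂ) - (j : ℂ)) + x) ^ 2)
        (fun j => (((mu i : ℂ) - (i : ℂ)) - ((lam' j : ℂ) - (j : ℂ)) + x) ^ 2)
        (fun j _ hj => by
          show (((mu i : ℂ) - (i : ℂ)) - ((lam j : ℂ) - (j : ℂ)) + x) ^ 2
            = (((mu i : ℂ) - (i : ℂ)) - ((lam' j : ℂ) - (j : ℂ)) + x) ^ 2
          rw [hlam'_ne j hj])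
    rw [hlam'_r, Nat.cast_sub hc, Nat.cast_one] at cross
    have eN : (((mu i : ℂ) - (i : ℂ)) - (((lam r : ℂ) - 1) - (r : ℂ)) + x) ^ 2 = N i := by
      simp only [hNdef]; ring
    have eD : (((mu i : ℂ) - (i : ℂ)) - ((lam r : ℂ) - (r : ℂ)) + x) ^ 2 = D i := by
      simp only [hDdef]; ring
    rw [eN, eD] at cross
    exact cross_to_ratio (hNne i) cross
  have D_eq :
      (∏ i ∈ Icc 1 K, ∏ j ∈ Icc 1 K,
        (((mu i : ℂ) - (i : ℂ)) - ((lam j : ℂ) - (j : ℂ)) + x) ^ 2)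
      = (∏ i ∈ Icc 1 K, ∏ j ∈ Icc 1 K,
          (((mu i : ℂ) - (i : ℂ)) - ((lam' j : ℂ) - (j : ℂ)) + x) ^ 2)
        * ∏ i ∈ Icc 1 K, (D i * (N i)⁻¹) := by
    rw [Finset.prod_congr rfl Dinner, prod_mul_distrib]
  -- ### RHS ratio
  have R_eq : keyRHS K lam mu x
      = keyRHS K lam' mu x * (((lam r - 1 + (K - r) : ℕ) : ℂ) + 1 - x) ^ 2 := by
    unfold keyRHS
    have hG'ne : (∏ t ∈ range (mu r + (K - r) + 1), (x + (t : ℂ))) ^ 2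
        * (∏ t ∈ range (lam' r + (K - r)), ((t : ℂ) + 1 - x)) ^ 2 ≠ 0 := by
      apply mul_ne_zero
      · apply pow_ne_zero
        apply Finset.prod_ne_zero_iff.mpr
        intro t _ h
        exact hx (-(t : ℤ)) (by push_cast; linear_combination h)
      · apply pow_ne_zero
        apply Finset.prod_ne_zero_iff.mpr
        intro t _ h
        exact hx ((t : ℤ) + 1) (by push_cast; linear_combination -h)
    have cross := prod_swap_one (Icc 1 K) r hrmem
        (fun i => (∏ t ∈ range (mu i + (K - i) + 1), (x + (t : ℂ))) ^ 2
          * (∏ t ∈ range (lam i + (K - i)), ((t : ℂ) + 1 - x)) ^ 2)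
        (fun i => (∏ t ∈ range (mu i + (K - i) + 1), (x + (t : ℂ))) ^ 2
          * (∏ t ∈ range (lam' i + (K - i)), ((t : ℂ) + 1 - x)) ^ 2)
        (fun i _ hir => by
          show (∏ t ∈ range (mu i + (K - i) + 1), (x + (t : ℂ))) ^ 2
              * (∏ t ∈ range (lam i + (K - i)), ((t : ℂ) + 1 - x)) ^ 2
            = (∏ t ∈ range (mu i + (K - i) + 1), (x + (t : ℂ))) ^ 2
              * (∏ t ∈ range (lam' i + (K - i)), ((t : ℂ) + 1 - x)) ^ 2
          rw [hlam'_ne i hir])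
    have hS : (∏ t ∈ range (lam r + (K - r)), ((t : ℂ) + 1 - x))
        = (∏ t ∈ range (lam' r + (K - r)), ((t : ℂ) + 1 - x))
          * (((lam r - 1 + (K - r) : ℕ) : ℂ) + 1 - x) := by
      rw [hlam'_r, show lam r + (K - r) = (lam r - 1 + (K - r)) + 1 by omega,
        prod_range_succ]
    rw [hS] at cross
    apply mul_right_cancel₀ hG'ne
    linear_combination cross
  -- ### the bracket identity
  have final : ((∏ i ∈ Icc 1 (r - 1), (N i * (D i)⁻¹)) * N r
      * (∏ j ∈ Icc 1 (mu r),
          (((conjC K mu j : ℂ) - (j : ℂ) + 1 + (zr : ℂ) - x) ^ 2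
            * ((((conjC K mu j : ℂ) - (j : ℂ) + (zr : ℂ) - x) ^ 2))⁻¹)))
      * (∏ i ∈ Icc 1 K, (D i * (N i)⁻¹))
      = (((lam r - 1 + (K - r) : ℕ) : ℂ) + 1 - x) ^ 2 := by
    rw [prod_split3 (fun i => D i * (N i)⁻¹) r K hr1 hrK]
    have hP1 : ∏ i ∈ Icc (r + 1) K, (D i * (N i)⁻¹)
        = ∏ i ∈ Icc (r + 1) K,
            (((mu i : ℂ) - (i : ℂ) - (zr : ℂ) + x) ^ 2
              * ((((mu i : ℂ) - (i : ℂ) - (zr : ℂ) + 1 + x) ^ 2))⁻¹) := by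
      apply Finset.prod_congr rfl
      intro i _
      congr 1
      · simp only [hDdef]; rw [hzrdef]; push_cast; ring
      · congr 1; simp only [hNdef]; rw [hzrdef]; push_cast; ring
    rw [hP1]
    have cancel : (∏ i ∈ Icc 1 (r - 1), (N i * (D i)⁻¹))
        * (∏ i ∈ Icc 1 (r - 1), (D i * (N i)⁻¹)) = 1 := by
      rw [← prod_mul_distrib]
      apply Finset.prod_eq_one
      intro i _
      field_simp
      rw [mul_comm (N i) (D i), div_self (mul_ne_zero (hDne i) (hNne i))]
    have hDr : D r = ((mu r : ℂ) - (r : ℂ) - (zr : ℂ) + x) ^ 2 := by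
      simp only [hDdef]; rw [hzrdef]; push_cast; ring
    calc ((∏ i ∈ Icc 1 (r - 1), (N i * (D i)⁻¹)) * N r
        * (∏ j ∈ Icc 1 (mu r),
            (((conjC K mu j : ℂ) - (j : ℂ) + 1 + (zr : ℂ) - x) ^ 2
              * ((((conjC K mu j : ℂ) - (j : ℂ) + (zr : ℂ) - x) ^ 2))⁻¹)))
        * ((∏ i ∈ Icc 1 (r - 1), (D i * (N i)⁻¹)) * (D r * (N r)⁻¹)
          * ∏ i ∈ Icc (r + 1) K,
              (((mu i : ℂ) - (i : ℂ) - (zr : ℂ) + x) ^ 2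
                * ((((mu i : ℂ) - (i : ℂ) - (zr : ℂ) + 1 + x) ^ 2))⁻¹))
        = ((∏ i ∈ Icc 1 (r - 1), (N i * (D i)⁻¹)) * (∏ i ∈ Icc 1 (r - 1), (D i * (N i)⁻¹)))
          * (N r * (N r)⁻¹)
          * ((D r * ∏ i ∈ Icc (r + 1) K,
              (((mu i : ℂ) - (i : ℂ) - (zr : ℂ) + x) ^ 2
                * ((((mu i : ℂ) - (i : ℂ) - (zr : ℂ) + 1 + x) ^ 2))⁻¹))
            * ∏ j ∈ Icc 1 (mu r),
              (((conjC K mu j : ℂ) - (j : ℂ) + 1 + (zr : ℂ) - x) ^ 2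
                * ((((conjC K mu j : ℂ) - (j : ℂ) + (zr : ℂ) - x) ^ 2))⁻¹)) := by
          ring
      _ = (D r * ∏ i ∈ Icc (r + 1) K,
              (((mu i : ℂ) - (i : ℂ) - (zr : ℂ) + x) ^ 2
                * ((((mu i : ℂ) - (i : ℂ) - (zr : ℂ) + 1 + x) ^ 2))⁻¹))
            * ∏ j ∈ Icc 1 (mu r),
              (((conjC K mu j : ℂ) - (j : ℂ) + 1 + (zr : ℂ) - x) ^ 2
                * ((((conjC K mu j : ℂ) - (j : ℂ) + (zr : ℂ) - x) ^ 2))⁻¹) := by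
          rw [cancel, mul_inv_cancel₀ (hNne r), one_mul, one_mul]
      _ = (((mu r : ℂ) - (r : ℂ) - (zr : ℂ) + x) ^ 2 * ∏ i ∈ Icc (r + 1) K,
              (((mu i : ℂ) - (i : ℂ) - (zr : ℂ) + x) ^ 2
                * ((((mu i : ℂ) - (i : ℂ) - (zr : ℂ) + 1 + x) ^ 2))⁻¹))
            * ∏ j ∈ Icc 1 (mu r),
              (((conjC K mu j : ℂ) - (j : ℂ) + 1 + (zr : ℂ) - x) ^ 2
                * ((((conjC K mu j : ℂ) - (j : ℂ) + (zr : ℂ) - x) ^ 2))⁻¹) := by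
          rw [hDr]
      _ = ((zr : ℂ) + (K : ℂ) - x) ^ 2 := LI
      _ = (((lam r - 1 + (K - r) : ℕ) : ℂ) + 1 - x) ^ 2 := by
          rw [hzrdef]
          push_cast [Nat.cast_sub hc, Nat.cast_sub hrK]
          ring
  -- ### assembly
  calc keyLHS K lam mu x
      = keyLHS K lam' mu x
        * (((∏ i ∈ Icc 1 (r - 1), (N i * (D i)⁻¹)) * N r
          * (∏ j ∈ Icc 1 (mu r),
              (((conjC K mu j : ℂ) - (j : ℂ) + 1 + (zr : ℂ) - x) ^ 2
                * ((((conjC K mu j : ℂ) - (j : ℂ) + (zr : ℂ) - x) ^ 2))⁻¹)))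
          * (∏ i ∈ Icc 1 K, (D i * (N i)⁻¹))) := by
        unfold keyLHS
        rw [Plam_eq, Pmu_eq, D_eq]
        ring
    _ = keyRHS K lam' mu x
        * (((∏ i ∈ Icc 1 (r - 1), (N i * (D i)⁻¹)) * N r
          * (∏ j ∈ Icc 1 (mu r),
              (((conjC K mu j : ℂ) - (j : ℂ) + 1 + (zr : ℂ) - x) ^ 2
                * ((((conjC K mu j : ℂ) - (j : ℂ) + (zr : ℂ) - x) ^ 2))⁻¹)))
          * (∏ i ∈ Icc 1 K, (D i * (N i)⁻¹))) := by rw [IH]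
    _ = keyRHS K lam' mu x * (((lam r - 1 + (K - r) : ℕ) : ℂ) + 1 - x) ^ 2 := by rw [final]
    _ = keyRHS K lam mu x := R_eq.symm

lemma key_symmL (K : ℕ) (lam mu : ℕ → ℕ) (x : ℂ) :
    keyLHS K mu lam (-x) = keyLHS K lam mu x := by
  unfold keyLHS
  have h1 : (∏ i ∈ Icc 1 K, ∏ j ∈ Icc 1 (mu i),
      ((conjC K mu j : ℂ) + (lam i : ℂ) - (i : ℂ) - (j : ℂ) + 1 + -x) ^ 2)
      = ∏ i ∈ Icc 1 K, ∏ j ∈ Icc 1 (mu i),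
        ((conjC K mu j : ℂ) + (lam i : ℂ) - (i : ℂ) - (j : ℂ) + 1 - x) ^ 2 :=
    Finset.prod_congr rfl fun i _ => Finset.prod_congr rfl fun j _ => by ring
  have h2 : (∏ i ∈ Icc 1 K, ∏ j ∈ Icc 1 (lam i),
      ((conjC K lam j : ℂ) + (mu i : ℂ) - (i : ℂ) - (j : ℂ) + 1 - -x) ^ 2)
      = ∏ i ∈ Icc 1 K, ∏ j ∈ Icc 1 (lam i),
        ((conjC K lam j : ℂ) + (mu i : ℂ) - (i : ℂ) - (j : ℂ) + 1 + x) ^ 2 :=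
    Finset.prod_congr rfl fun i _ => Finset.prod_congr rfl fun j _ => by ring
  have h3 : (∏ i ∈ Icc 1 K, ∏ j ∈ Icc 1 K,
      (((lam i : ℂ) - (i : ℂ)) - ((mu j : ℂ) - (j : ℂ)) + -x) ^ 2)
      = ∏ i ∈ Icc 1 K, ∏ j ∈ Icc 1 K,
        (((mu i : ℂ) - (i : ℂ)) - ((lam j : ℂ) - (j : ℂ)) + x) ^ 2 := by
    rw [Finset.prod_comm]
    exact Finset.prod_congr rfl fun i _ => Finset.prod_congr rfl fun j _ => by ring
  rw [h1, h2, h3]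
  ring

lemma key_symmR (K : ℕ) (lam mu : ℕ → ℕ) (x : ℂ) :
    keyRHS K mu lam (-x) = keyRHS K lam mu x := by
  unfold keyRHS
  apply Finset.prod_congr rfl
  intro i _
  have e1 : (∏ t ∈ range (lam i + (K - i) + 1), (-x + (t : ℂ)))
      = (∏ t ∈ range (lam i + (K - i)), ((t : ℂ) + 1 - x)) * (-x) := by
    rw [prod_range_succ' (fun t => -x + (t : ℂ)) (lam i + (K - i))]
    congr 1
    · exact Finset.prod_congr rfl fun t _ => by push_cast; ring
    · simp
  have e2 : (∏ t ∈ range (mu i + (K - i) + 1), (x + (t : ℂ)))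
      = (∏ t ∈ range (mu i + (K - i)), ((t : ℂ) + 1 + x)) * x := by
    rw [prod_range_succ' (fun t => x + (t : ℂ)) (mu i + (K - i))]
    congr 1
    · exact Finset.prod_congr rfl fun t _ => by push_cast; ring
    · simp
  have e3 : (∏ t ∈ range (mu i + (K - i)), ((t : ℂ) + 1 - -x))
      = ∏ t ∈ range (mu i + (K - i)), ((t : ℂ) + 1 + x) :=
    Finset.prod_congr rfl fun t _ => by ring
  rw [e1, e2, e3]
  ring

lemma row_base (K : ℕ) (x : ℂ) (i : ℕ) (hi1 : 1 ≤ i) (hiK : i ≤ K) :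
    (∏ j ∈ Icc 1 K, ((j : ℂ) - (i : ℂ) + x) ^ 2)
      = (∏ t ∈ range (K - i + 1), (x + (t : ℂ))) ^ 2
        * (∏ t ∈ range (i - 1), ((t : ℂ) + 1 - x)) ^ 2 := by
  have hB : (∏ j ∈ Icc 1 (i - 1), ((j : ℂ) - (i : ℂ) + x) ^ 2)
      = ∏ t ∈ range (i - 1), ((t : ℂ) + 1 - x) ^ 2 := by
    apply Finset.prod_bij' (i := fun j _ => i - 1 - j) (j := fun t _ => i - 1 - t)
    · intro a ha
      simp only [mem_Icc] at ha
      simp only [mem_range]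
      omega
    · intro t ht
      simp only [mem_range] at ht
      simp only [mem_Icc]
      omega
    · intro a ha
      simp only [mem_Icc] at ha
      omega
    · intro t ht
      simp only [mem_range] at ht
      omega
    · intro a ha
      simp only [mem_Icc] at ha
      rw [show i - 1 - a = i - (1 + a) by omega, Nat.cast_sub (by omega)]
      push_cast
      ring
  have hA : (∏ j ∈ Icc (i + 1) K, ((j : ℂ) - (i : ℂ) + x) ^ 2)
      = ∏ t ∈ range (K - i), (x + ((t : ℂ) + 1)) ^ 2 := by
    apply Finset.prod_bij' (i := fun j _ => j - i - 1) (j := fun t _ => i + 1 + t)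
    · intro a ha
      simp only [mem_Icc] at ha
      simp only [mem_range]
      omega
    · intro t ht
      simp only [mem_range] at ht
      simp only [mem_Icc]
      omega
    · intro a ha
      simp only [mem_Icc] at ha
      omega
    · intro t ht
      simp only [mem_range] at ht
      omega
    · intro a ha
      simp only [mem_Icc] at ha
      rw [show a - i - 1 = a - (i + 1) by omega, Nat.cast_sub (by omega)]
      push_cast
      ring
  rw [prod_split3 (fun j => ((j : ℂ) - (i : ℂ) + x) ^ 2) i K hi1 hiK]
  rw [hB, hA, prod_range_succ' (fun t => x + (t : ℂ)) (K - i), Finset.prod_pow,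
    Finset.prod_pow]
  have e4 : (∏ t ∈ range (K - i), (x + ((t + 1 : ℕ) : ℂ)))
      = ∏ t ∈ range (K - i), (x + ((t : ℂ) + 1)) :=
    Finset.prod_congr rfl fun t _ => by push_cast; ring
  rw [e4]
  push_cast
  ring

lemma key_base (K : ℕ) (lam mu : ℕ → ℕ)
    (hlam0 : ∀ i ∈ Icc 1 K, lam i = 0) (hmu0 : ∀ i ∈ Icc 1 K, mu i = 0)
    (x : ℂ) : keyLHS K lam mu x = keyRHS K lam mu x := by
  unfold keyLHS keyRHS
  have h1 : (∏ i ∈ Icc 1 K, ∏ j ∈ Icc 1 (lam i),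
      ((conjC K lam j : ℂ) + (mu i : ℂ) - (i : ℂ) - (j : ℂ) + 1 + x) ^ 2) = 1 := by
    apply Finset.prod_eq_one
    intro i hi
    rw [hlam0 i hi, Finset.Icc_eq_empty (by norm_num), prod_empty]
  have h2 : (∏ i ∈ Icc 1 K, ∏ j ∈ Icc 1 (mu i),
      ((conjC K mu j : ℂ) + (lam i : ℂ) - (i : ℂ) - (j : ℂ) + 1 - x) ^ 2) = 1 := by
    apply Finset.prod_eq_one
    intro i hi
    rw [hmu0 i hi, Finset.Icc_eq_empty (by norm_num), prod_empty]
  have h3 : (∏ i ∈ Icc 1 K, ∏ j ∈ Icc 1 K,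
      (((mu i : ℂ) - (i : ℂ)) - ((lam j : ℂ) - (j : ℂ)) + x) ^ 2)
      = ∏ i ∈ Icc 1 K, ∏ j ∈ Icc 1 K, ((j : ℂ) - (i : ℂ) + x) ^ 2 := by
    apply Finset.prod_congr rfl
    intro i hi
    apply Finset.prod_congr rfl
    intro j hj
    rw [hmu0 i hi, hlam0 j hj]
    push_cast
    ring
  have h4 : (∏ i ∈ Icc 1 K,
      ((∏ t ∈ range (mu i + (K - i) + 1), (x + (t : ℂ))) ^ 2
        * (∏ t ∈ range (lam i + (K - i)), ((t : ℂ) + 1 - x)) ^ 2))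
      = ∏ i ∈ Icc 1 K,
        ((∏ t ∈ range (K - i + 1), (x + (t : ℂ))) ^ 2
          * (∏ t ∈ range (K - i), ((t : ℂ) + 1 - x)) ^ 2) := by
    apply Finset.prod_congr rfl
    intro i hi
    rw [hmu0 i hi, hlam0 i hi, Nat.zero_add (K - i)]
  rw [h1, h2, h3, h4, one_mul, one_mul]
  have h5 : (∏ i ∈ Icc 1 K, ∏ j ∈ Icc 1 K, ((j : ℂ) - (i : ℂ) + x) ^ 2)
      = ∏ i ∈ Icc 1 K,
        ((∏ t ∈ range (K - i + 1), (x + (t : ℂ))) ^ 2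
          * (∏ t ∈ range (i - 1), ((t : ℂ) + 1 - x)) ^ 2) := by
    apply Finset.prod_congr rfl
    intro i hi
    simp only [mem_Icc] at hi
    exact row_base K x i hi.1 hi.2
  rw [h5, prod_mul_distrib, prod_mul_distrib]
  congr 1
  apply Finset.prod_bij' (i := fun a _ => K + 1 - a) (j := fun a _ => K + 1 - a)
  · intro a ha
    simp only [mem_Icc] at ha ⊢
    omega
  · intro a ha
    simp only [mem_Icc] at ha ⊢
    omega
  · intro a ha
    simp only [mem_Icc] at ha
    omega
  · intro a ha
    simp only [mem_Icc] at ha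
    omega
  · intro a ha
    simp only [mem_Icc] at ha
    rw [show K - (K + 1 - a) = a - 1 by omega]

lemma update_mono (f : ℕ → ℕ) (hmono : ∀ i j, 1 ≤ i → i ≤ j → f j ≤ f i)
    (r : ℕ) (htop : ∀ t, r < t → f t = 0) :
    ∀ i j, 1 ≤ i → i ≤ j → Function.update f r (f r - 1) j ≤ Function.update f r (f r - 1) i := by
  intro i j hi hij
  by_cases hjr : j = r
  · by_cases hir : i = r
    · rw [hjr, hir]
    · rw [hjr, Function.update_self, Function.update_of_ne hir]
      have := hmono i r hi (by omega)
      omega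
  · rw [Function.update_of_ne hjr]
    by_cases hir : i = r
    · rw [hir, Function.update_self]
      have : f j = 0 := htop j (by omega)
      omega
    · rw [Function.update_of_ne hir]
      exact hmono i j hi hij

lemma key_aux (K : ℕ) : ∀ n : ℕ, ∀ lam mu : ℕ → ℕ,
    (∀ i j, 1 ≤ i → i ≤ j → lam j ≤ lam i) → (∀ i, K < i → lam i = 0) →
    (∀ i j, 1 ≤ i → i ≤ j → mu j ≤ mu i) → (∀ i, K < i → mu i = 0) →
    ∀ x : ℂ, (∀ m : ℤ, x ≠ (m : ℂ)) →
    (∑ i ∈ Icc 1 K, (lam i + mu i)) ≤ n →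
    keyLHS K lam mu x = keyRHS K lam mu x := by
  intro n
  induction n with
  | zero =>
      intro lam mu hlm hll hmm hml x hx hsum
      have hz : ∀ i ∈ Icc 1 K, lam i + mu i = 0 := by
        rw [← Finset.sum_eq_zero_iff]
        omega
      exact key_base K lam mu (fun i hi => by have := hz i hi; omega)
        (fun i hi => by have := hz i hi; omega) x
  | succ n ih =>
      intro lam mu hlm hll hmm hml x hx hsum
      by_cases hlz : ∀ i ∈ Icc 1 K, lam i = 0
      · by_cases hmz : ∀ i ∈ Icc 1 K, mu i = 0
        · exact key_base K lam mu hlz hmz x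
        · -- remove a box from mu via symmetry
          push_neg at hmz
          set S := (Icc 1 K).filter (fun t => mu t ≠ 0) with hSdef
          have hSne : S.Nonempty := by
            obtain ⟨i, hi, hne⟩ := hmz
            exact ⟨i, by simp only [hSdef, mem_filter]; exact ⟨hi, hne⟩⟩
          set r := S.max' hSne with hrdef
          have hrS : r ∈ S := S.max'_mem hSne
          have hrIcc : r ∈ Icc 1 K := mem_of_mem_filter r hrS
          have hrne : mu r ≠ 0 := by
            have := hrS
            simp only [hSdef, mem_filter] at this
            exact this.2
          simp only [mem_Icc] at hrIcc
          have htop : ∀ t, r < t → mu t = 0 := by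
            intro t ht
            by_cases htK : t ≤ K
            · by_contra hne
              have : t ∈ S := by
                simp only [hSdef, mem_filter, mem_Icc]
                exact ⟨⟨by omega, htK⟩, hne⟩
              have := S.le_max' t this
              omega
            · exact hml t (by omega)
          have hx' : ∀ m : ℤ, -x ≠ (m : ℂ) := by
            intro m h
            apply hx (-m)
            push_cast
            linear_combination -h
          rw [← key_symmL, ← key_symmR]
          apply step K mu lam hmm hlm hll (-x) hx' r hrIcc.1 hrIcc.2
            (by omega) htop
          -- IH for (update mu r (mu r - 1), lam, -x)
          apply ih (Function.update mu r (mu r - 1)) lam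
          · exact update_mono mu hmm r htop
          · intro i hiK
            rw [Function.update_of_ne (by omega)]
            exact hml i hiK
          · exact hlm
          · exact hll
          · exact hx'
          · -- sum bound
            have hsum1 : (∑ i ∈ Icc 1 K, (Function.update mu r (mu r - 1) i + lam i)) + 1
                = ∑ i ∈ Icc 1 K, (mu i + lam i) := by
              rw [← Finset.add_sum_erase _ _ (by simp only [mem_Icc]; omega :
                    r ∈ Icc 1 K),
                ← Finset.add_sum_erase _ (fun i => mu i + lam i) (by simp only [mem_Icc]; omega :
                    r ∈ Icc 1 K),
                Finset.sum_congr rfl (fun i hi => by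
                  rw [Function.update_of_ne (Finset.ne_of_mem_erase hi)])]
              rw [Function.update_self]
              omega
            have hcomm : ∑ i ∈ Icc 1 K, (mu i + lam i) = ∑ i ∈ Icc 1 K, (lam i + mu i) :=
              Finset.sum_congr rfl (fun i _ => by omega)
            omega
      · -- remove a box from lam
        push_neg at hlz
        set S := (Icc 1 K).filter (fun t => lam t ≠ 0) with hSdef
        have hSne : S.Nonempty := by
          obtain ⟨i, hi, hne⟩ := hlz
          exact ⟨i, by simp only [hSdef, mem_filter]; exact ⟨hi, hne⟩⟩
        set r := S.max' hSne with hrdef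
        have hrS : r ∈ S := S.max'_mem hSne
        have hrIcc : r ∈ Icc 1 K := mem_of_mem_filter r hrS
        have hrne : lam r ≠ 0 := by
          have := hrS
          simp only [hSdef, mem_filter] at this
          exact this.2
        simp only [mem_Icc] at hrIcc
        have htop : ∀ t, r < t → lam t = 0 := by
          intro t ht
          by_cases htK : t ≤ K
          · by_contra hne
            have : t ∈ S := by
              simp only [hSdef, mem_filter, mem_Icc]
              exact ⟨⟨by omega, htK⟩, hne⟩
            have := S.le_max' t this
            omega
          · exact hll t (by omega)
        apply step K lam mu hlm hmm hml x hx r hrIcc.1 hrIcc.2 (by omega) htop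
        apply ih (Function.update lam r (lam r - 1)) mu
        · exact update_mono lam hlm r htop
        · intro i hiK
          rw [Function.update_of_ne (by omega)]
          exact hll i hiK
        · exact hmm
        · exact hml
        · exact hx
        · have hsum1 : (∑ i ∈ Icc 1 K, (Function.update lam r (lam r - 1) i + mu i)) + 1
              = ∑ i ∈ Icc 1 K, (lam i + mu i) := by
            rw [← Finset.add_sum_erase _ _ (by simp only [mem_Icc]; omega :
                  r ∈ Icc 1 K),
              ← Finset.add_sum_erase _ (fun i => lam i + mu i) (by simp only [mem_Icc]; omega :
                  r ∈ Icc 1 K),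
              Finset.sum_congr rfl (fun i hi => by
                rw [Function.update_of_ne (Finset.ne_of_mem_erase hi)])]
            rw [Function.update_self]
            omega
          omega

lemma inv_mul_aux (u v : ℂ) (hv : v ≠ 0) : (u * v)⁻¹ * v = u⁻¹ := by
  rw [mul_inv, mul_assoc, inv_mul_cancel₀ hv, mul_one]

/-- Full interaction formula: for partitions `λ, μ` of length `≤ K` and generic `x`,
`1/(∏_{(i,j)∈λ}(λ'_j+μ_i−i−j+1+x)² · ∏_{(i,j)∈μ}(μ'_j+λ_i−i−j+1−x)²)
 = ∏_{i=1}^{K} Γ(x)²Γ(1−x)²/(Γ(m_i+K+1+x)²Γ(l_i+K+1−x)²) · ∏_{i,j=1}^{K}(m_i−l_j+x)²`. -/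
theorem full_interaction (K : ℕ) (hK : 0 < K) (lam mu : ℕ → ℕ)
    (hlam_mono : ∀ i j, 1 ≤ i → i ≤ j → lam j ≤ lam i)
    (hlam_len : ∀ i, K < i → lam i = 0)
    (hmu_mono : ∀ i j, 1 ≤ i → i ≤ j → mu j ≤ mu i)
    (hmu_len : ∀ i, K < i → mu i = 0)
    (x : ℂ) (hx : ∀ m : ℤ, x ≠ (m : ℂ)) :
    ((∏ i ∈ Finset.Icc 1 K, ∏ j ∈ Finset.Icc 1 (lam i),
        (((((Finset.Icc 1 K).filter fun t => j ≤ lam t).card : ℂ)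
            + (mu i : ℂ) - (i : ℂ) - (j : ℂ) + 1 + x)) ^ 2) *
      ∏ i ∈ Finset.Icc 1 K, ∏ j ∈ Finset.Icc 1 (mu i),
        (((((Finset.Icc 1 K).filter fun t => j ≤ mu t).card : ℂ)
            + (lam i : ℂ) - (i : ℂ) - (j : ℂ) + 1 - x)) ^ 2)⁻¹ =
      (∏ i ∈ Finset.Icc 1 K,
          (Complex.Gamma x ^ 2 * Complex.Gamma (1 - x) ^ 2) /
            (Complex.Gamma (((mu i : ℂ) - (i : ℂ)) + (K : ℂ) + 1 + x) ^ 2 *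
              Complex.Gamma (((lam i : ℂ) - (i : ℂ)) + (K : ℂ) + 1 - x) ^ 2)) *
        ∏ i ∈ Finset.Icc 1 K, ∏ j ∈ Finset.Icc 1 K,
          (((mu i : ℂ) - (i : ℂ)) - ((lam j : ℂ) - (j : ℂ)) + x) ^ 2 := by
  have hkey := key_aux K (∑ i ∈ Icc 1 K, (lam i + mu i)) lam mu hlam_mono hlam_len
    hmu_mono hmu_len x hx le_rfl
  simp only [keyLHS, keyRHS, conjC] at hkey
  have hxt : ∀ t : ℕ, x + (t : ℂ) ≠ 0 := fun t h => hx (-(t : ℤ)) (by push_cast; linear_combination h)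
  have h1xt : ∀ t : ℕ, (1 - x) + (t : ℂ) ≠ 0 := fun t h =>
    hx ((t : ℤ) + 1) (by push_cast; linear_combination -h)
  have hGx : Complex.Gamma x ≠ 0 :=
    Complex.Gamma_ne_zero (fun m h => hx (-(m : ℤ)) (by push_cast; linear_combination h))
  have hG1x : Complex.Gamma (1 - x) ≠ 0 :=
    Complex.Gamma_ne_zero (fun m h => hx ((m : ℤ) + 1) (by push_cast; linear_combination -h))
  have hRfac : ∀ i ∈ Icc 1 K,
      (Complex.Gamma x ^ 2 * Complex.Gamma (1 - x) ^ 2) /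
        (Complex.Gamma (((mu i : ℂ) - (i : ℂ)) + (K : ℂ) + 1 + x) ^ 2 *
          Complex.Gamma (((lam i : ℂ) - (i : ℂ)) + (K : ℂ) + 1 - x) ^ 2)
      = ((∏ t ∈ range (mu i + (K - i) + 1), (x + (t : ℂ))) ^ 2
          * (∏ t ∈ range (lam i + (K - i)), ((t : ℂ) + 1 - x)) ^ 2)⁻¹ := by
    intro i hi
    simp only [mem_Icc] at hi
    have hGmu : Complex.Gamma (((mu i : ℂ) - (i : ℂ)) + (K : ℂ) + 1 + x)
        = (∏ t ∈ range (mu i + (K - i) + 1), (x + (t : ℂ))) * Complex.Gamma x := by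
      rw [show ((mu i : ℂ) - (i : ℂ)) + (K : ℂ) + 1 + x
          = x + ((mu i + (K - i) + 1 : ℕ) : ℂ) by
        push_cast [Nat.cast_sub hi.2]; ring]
      exact Gamma_prod x hxt _
    have hGlam : Complex.Gamma (((lam i : ℂ) - (i : ℂ)) + (K : ℂ) + 1 - x)
        = (∏ t ∈ range (lam i + (K - i)), ((t : ℂ) + 1 - x)) * Complex.Gamma (1 - x) := by
      rw [show ((lam i : ℂ) - (i : ℂ)) + (K : ℂ) + 1 - x
          = (1 - x) + ((lam i + (K - i) : ℕ) : ℂ) by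
        push_cast [Nat.cast_sub hi.2]; ring]
      rw [Gamma_prod (1 - x) h1xt _]
      congr 1
      exact Finset.prod_congr rfl (fun t _ => by ring)
    have hR : (∏ t ∈ range (mu i + (K - i) + 1), (x + (t : ℂ))) ≠ 0 :=
      Finset.prod_ne_zero_iff.mpr (fun t _ => hxt t)
    have hS : (∏ t ∈ range (lam i + (K - i)), ((t : ℂ) + 1 - x)) ≠ 0 :=
      Finset.prod_ne_zero_iff.mpr (fun t _ h =>
        hx ((t : ℤ) + 1) (by push_cast; linear_combination -h))
    rw [hGmu, hGlam]
    field_simp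
  have hD : (∏ i ∈ Icc 1 K, ∏ j ∈ Icc 1 K,
      (((mu i : ℂ) - (i : ℂ)) - ((lam j : ℂ) - (j : ℂ)) + x) ^ 2) ≠ 0 := by
    apply Finset.prod_ne_zero_iff.mpr
    intro i _
    apply Finset.prod_ne_zero_iff.mpr
    intro j _
    apply pow_ne_zero
    intro h
    apply hx ((lam j : ℤ) - (j : ℤ) - (mu i : ℤ) + (i : ℤ))
    push_cast
    linear_combination h
  rw [Finset.prod_congr rfl hRfac, Finset.prod_inv_distrib, ← hkey, inv_mul_aux _ _ hD]
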